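/- Suppose r2 - (1-θ)H - d + (d+q)t > 0 along the relevant range. If (r1√(d+q) - r2√d)/(√(d+q) - √d) > 2d + q + H√(d+q)/(√(d+q) - √d), then for every θ ∈ [0,1], f(√(d/(d+q)), θ) < 0, where f(t,θ) = t(r2 - (1-θ)H - d + (d+q)t) - (r1 - θH - (d+q) + d/t). -/

import Mathlib

theorem stmt_3 (d q H r1 r2 : ℝ) (hd : 0 < d) (hq : 0 < q) (hH : 0 < H)
    (hpos : ∀ θ ∈ Set.Icc (0:ℝ) 1,
      r2 - (1 - θ) * H - d + (d + q) * Real.sqrt (d / (d + q)) > 0)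
    (hbig : (r1 * Real.sqrt (d + q) - r2 * Real.sqrt d) / (Real.sqrt (d + q) - Real.sqrt d) >
      2 * d + q + H * Real.sqrt (d + q) / (Real.sqrt (d + q) - Real.sqrt d)) :
    ∀ θ ∈ Set.Icc (0:ℝ) 1,
      Real.sqrt (d / (d + q)) *
          (r2 - (1 - θ) * H - d + (d + q) * Real.sqrt (d / (d + q))) -
        (r1 - θ * H - (d + q) + d / Real.sqrt (d / (d + q))) < 0 := by
  intro θ hθ
  obtain ⟨hθ0, hθ1⟩ := hθ
  set s := Real.sqrt d with hs
  set u := Real.sqrt (d + q) with hu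
  have hs0 : 0 < s := Real.sqrt_pos.mpr hd
  have hu0 : 0 < u := Real.sqrt_pos.mpr (by linarith)
  have hs2 : s ^ 2 = d := Real.sq_sqrt hd.le
  have hu2 : u ^ 2 = d + q := Real.sq_sqrt (by linarith)
  have hsu : s < u := by
    apply Real.sqrt_lt_sqrt hd.le; linarith
  have hdiff : 0 < u - s := by linarith
  have hrt : Real.sqrt (d / (d + q)) = s / u := Real.sqrt_div hd.le _
  rw [hrt]
  have h1 : r1 * u - r2 * s > (2 * d + q) * (u - s) + H * u := by
    rw [gt_iff_lt, add_div' _ _ _ hdiff.ne', div_lt_div_iff₀ hdiff hdiff] at hbig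
    nlinarith [hbig]
  rw [div_div_eq_mul_div]
  have h2 : d * u / s = s * u := by
    rw [← hs2]; field_simp
  rw [h2]
  have h3 : s / u * (r2 - (1 - θ) * H - d + (d + q) * (s / u)) =
      (s * (r2 - (1 - θ) * H - d) + s ^ 2 * u) / u := by
    rw [← hu2]; field_simp
  rw [h3, div_sub' hu0.ne']
  apply div_neg_of_neg_of_pos _ hu0
  have e1 : s ^ 2 * u = d * u := by rw [hs2]
  have e2 : u ^ 2 * u = (d + q) * u := by rw [hu2]
  have e3 : u ^ 2 * s = (d + q) * s := by rw [hu2]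
  nlinarith [h1, mul_nonneg (mul_nonneg (sub_nonneg.mpr hθ1) hH.le) (by linarith : (0:ℝ) ≤ u + s)]
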